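/- Every proper monomial ideal I in the polynomial ring S = k[x_1,…,x_n] over a field k admits a Stanley filtration of S/I. -/

import Mathlib

open MvPolynomial

/-- `I` is a monomial ideal: it is generated by a set of monomials `x^u`. -/
def IsMonomialIdeal {k : Type} [Field k] {n : ℕ} (I : Ideal (MvPolynomial (Fin n) k)) : Prop :=
  ∃ G : Set (Fin n →₀ ℕ), I = Ideal.span ((fun u => (monomial u (1 : k))) '' G)

/-- The set of exponent vectors of monomials in the pair `(x^u, σ)`. -/
def stanleyPairSet {n : ℕ} (u : Fin n →₀ ℕ) (σ : Finset (Fin n)) : Set (Fin n →₀ ℕ) :=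
  {w | ∃ v : Fin n →₀ ℕ, (∀ i, v i ≠ 0 → i ∈ σ) ∧ w = u + v}

/-- A Stanley decomposition of `S/I`. -/
def IsStanleyDecomp {k : Type} [Field k] {n : ℕ} (I : Ideal (MvPolynomial (Fin n) k))
    (𝔖 : Finset ((Fin n →₀ ℕ) × Finset (Fin n))) : Prop :=
  (∀ p ∈ 𝔖, ∀ q ∈ 𝔖, p ≠ q → Disjoint (stanleyPairSet p.1 p.2) (stanleyPairSet q.1 q.2)) ∧
  (⋃ p ∈ (𝔖 : Set ((Fin n →₀ ℕ) × Finset (Fin n))), stanleyPairSet p.1 p.2)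
      = {w | monomial w (1 : k) ∉ I}

/-- A Stanley filtration of `S/I`: an ordered Stanley decomposition
`(x^{u_1},σ_1),…,(x^{u_m},σ_m)` such that for every `1 ≤ j ≤ m` the first `j` pairs form a
Stanley decomposition of `S/(I + ⟨x^{u_{j+1}},…,x^{u_m}⟩)`. -/
def IsStanleyFiltration {k : Type} [Field k] {n : ℕ} (I : Ideal (MvPolynomial (Fin n) k))
    (L : List ((Fin n →₀ ℕ) × Finset (Fin n))) : Prop :=
  IsStanleyDecomp I L.toFinset ∧
  ∀ j : ℕ, 1 ≤ j → j ≤ L.length →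
    IsStanleyDecomp
      (I ⊔ Ideal.span ((fun p : (Fin n →₀ ℕ) × Finset (Fin n) => monomial p.1 (1 : k)) ''
        {p | p ∈ L.drop j}))
      (L.take j).toFinset


namespace StanleyAux

variable {n : ℕ}

/-- No monomial of the cone of `p` is divisible by the base monomial of `q`. -/
def NoDom (p q : (Fin n →₀ ℕ) × Finset (Fin n)) : Prop :=
  ∀ w ∈ stanleyPairSet p.1 p.2, ¬ q.1 ≤ w

lemma le_of_mem {u : Fin n →₀ ℕ} {σ : Finset (Fin n)} {w : Fin n →₀ ℕ}
    (h : w ∈ stanleyPairSet u σ) : u ≤ w := by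
  obtain ⟨v, -, rfl⟩ := h
  exact self_le_add_right u v

lemma single_le_single {a : Fin n} {e e' : ℕ} (h : e ≤ e') :
    (Finsupp.single a e : Fin n →₀ ℕ) ≤ Finsupp.single a e' := by
  rw [Finsupp.le_def]
  intro i
  simp only [Finsupp.single_apply]
  split <;> omega

lemma chain_stab (V : ℕ → Set (Fin n →₀ ℕ)) (hmono : Monotone V)
    (hup : ∀ e, ∀ w ∈ V e, ∀ w', w ≤ w' → w' ∈ V e) :
    ∃ d, ∀ e, d ≤ e → V e = V d := by
  by_contra h
  push_neg at h
  choose E hE1 hE2 using h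
  have hw : ∀ d, ∃ w, w ∈ V (E d) ∧ w ∉ V d := by
    intro d
    by_contra hc
    push_neg at hc
    exact hE2 d (Set.Subset.antisymm (fun w hw => by_contra fun hw' => hw' (hc w hw))
      (hmono (hE1 d)))
  choose W hW1 hW2 using hw
  let g : ℕ → ℕ := fun k => Nat.rec 0 (fun _ m => E m + 1) k
  have hgsucc : ∀ k, g (k + 1) = E (g k) + 1 := fun k => rfl
  have hgmono : StrictMono g := strictMono_nat_of_lt_succ (fun k => by
    rw [hgsucc]; exact Nat.lt_succ_of_le (hE1 _))
  obtain ⟨m, l, hml, hle⟩ := (wellQuasiOrdered_le (α := Fin n →₀ ℕ))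
    (fun k => W (g k))
  have h1 : W (g m) ∈ V (g l) := by
    refine hmono ?_ (hW1 (g m))
    calc E (g m) ≤ E (g m) + 1 := Nat.le_succ _
    _ = g (m + 1) := (hgsucc m).symm
    _ ≤ g l := hgmono.monotone hml
  exact hW2 (g l) (hup _ _ h1 _ hle)

lemma mem_cone_shift {a : Fin n} {u : Fin n →₀ ℕ} {σ : Finset (Fin n)} (hu : u a = 0)
    (hσ : a ∉ σ) (e : ℕ) (w : Fin n →₀ ℕ) :
    w ∈ stanleyPairSet (u + Finsupp.single a e) σ ↔
      (Finsupp.erase a w ∈ stanleyPairSet u σ ∧ w a = e) := by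
  constructor
  · rintro ⟨v, hv, rfl⟩
    have hva : v a = 0 := by
      by_contra h; exact hσ (hv a h)
    refine ⟨⟨v, hv, ?_⟩, ?_⟩
    · rw [Finsupp.erase_add, Finsupp.erase_add, Finsupp.erase_single,
        Finsupp.erase_of_notMem_support (by simp [Finsupp.mem_support_iff, hu]),
        Finsupp.erase_of_notMem_support (by simp [Finsupp.mem_support_iff, hva])]
      simp
    · simp [Finsupp.add_apply, hu, hva]
  · rintro ⟨⟨v, hv, hev⟩, hwa⟩
    refine ⟨v, hv, ?_⟩
    have h1 := Finsupp.erase_add_single a w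
    rw [hev, hwa] at h1
    rw [← h1, add_right_comm]

lemma mem_cone_top {a : Fin n} {u : Fin n →₀ ℕ} {σ : Finset (Fin n)} (hu : u a = 0)
    (hσ : a ∉ σ) (d : ℕ) (w : Fin n →₀ ℕ) :
    w ∈ stanleyPairSet (u + Finsupp.single a d) (insert a σ) ↔
      (Finsupp.erase a w ∈ stanleyPairSet u σ ∧ d ≤ w a) := by
  constructor
  · rintro ⟨v, hv, rfl⟩
    refine ⟨⟨v.erase a, ?_, ?_⟩, ?_⟩
    · intro i hi
      rcases eq_or_ne i a with rfl | hia
      · simp [Finsupp.erase_same] at hi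
      · rw [Finsupp.erase_ne hia] at hi
        rcases Finset.mem_insert.mp (hv i hi) with h | h
        · exact absurd h hia
        · exact h
    · rw [Finsupp.erase_add, Finsupp.erase_add, Finsupp.erase_single,
        Finsupp.erase_of_notMem_support (by simp [Finsupp.mem_support_iff, hu])]
      simp
    · simp [Finsupp.add_apply, hu]
  · rintro ⟨⟨v, hv, hev⟩, hwa⟩
    refine ⟨v + Finsupp.single a (w a - d), ?_, ?_⟩
    · intro i hi
      rcases eq_or_ne a i with rfl | hia
      · exact Finset.mem_insert_self a σ
      · refine Finset.mem_insert_of_mem (hv i ?_)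
        simpa [Finsupp.add_apply, Finsupp.single_apply, hia] using hi
    · have h1 := Finsupp.erase_add_single a w
      rw [hev] at h1
      have h2 : Finsupp.single a d + Finsupp.single a (w a - d) = Finsupp.single a (w a) := by
        rw [← Finsupp.single_add]; congr 1; omega
      calc w = u + v + Finsupp.single a (w a) := h1.symm
      _ = u + Finsupp.single a d + (v + Finsupp.single a (w a - d)) := by
            rw [← h2]; abel

lemma le_erase_of_add_single_le {a : Fin n} {q w : Fin n →₀ ℕ} (hq : q a = 0) {e : ℕ}
    (h : q + Finsupp.single a e ≤ w) : q ≤ Finsupp.erase a w := by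
  rw [Finsupp.le_def]
  intro i
  rcases eq_or_ne i a with rfl | hia
  · simp [hq]
  · have := Finsupp.le_def.mp h i
    rw [Finsupp.erase_ne hia]
    simpa [Finsupp.add_apply, Finsupp.single_apply, (Ne.symm hia)] using this

theorem comb_main (τ : Finset (Fin n)) :
    ∀ U : Set (Fin n →₀ ℕ), (∀ w ∈ U, ∀ w', w ≤ w' → w' ∈ U) →
    ∃ L : List ((Fin n →₀ ℕ) × Finset (Fin n)),
      (∀ p ∈ L, p.2 ⊆ τ ∧ ∀ i, p.1 i ≠ 0 → i ∈ τ) ∧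
      L.Pairwise NoDom ∧
      ∀ w : Fin n →₀ ℕ, (∃ p ∈ L, w ∈ stanleyPairSet p.1 p.2) ↔
        ((∀ i, w i ≠ 0 → i ∈ τ) ∧ w ∉ U) := by
  induction τ using Finset.induction_on with
  | empty =>
    intro U hU
    by_cases h0 : (0 : Fin n →₀ ℕ) ∈ U
    · refine ⟨[], by simp, by simp, fun w => ?_⟩
      simp only [List.not_mem_nil, false_and, exists_false, false_iff, not_and]
      intro hsupp hw
      have : w = 0 := by
        ext i
        by_contra hi
        exact absurd (hsupp i hi) (Finset.notMem_empty i)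
      exact hw (this ▸ h0)
    · refine ⟨[((0 : Fin n →₀ ℕ), (∅ : Finset (Fin n)))], by simp, by simp, fun w => ?_⟩
      constructor
      · rintro ⟨p, hp, v, hv, rfl⟩
        simp only [List.mem_singleton] at hp
        subst hp
        have hv0 : v = 0 := by
          ext i
          by_contra hi
          exact absurd (hv i hi) (Finset.notMem_empty i)
        subst hv0
        simpa using h0
      · rintro ⟨hsupp, hw⟩
        have hw0 : w = 0 := by
          ext i
          by_contra hi
          exact absurd (hsupp i hi) (Finset.notMem_empty i)
        exact ⟨_, List.mem_singleton_self _, 0, by simp, by simp [hw0]⟩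
  | @insert a s ha IH =>
    intro U hU
    set V : ℕ → Set (Fin n →₀ ℕ) := fun e => {w | w + Finsupp.single a e ∈ U} with hVdef
    have hVup : ∀ e, ∀ w ∈ V e, ∀ w', w ≤ w' → w' ∈ V e := fun e w hw w' hle =>
      hU _ hw _ (add_le_add hle le_rfl)
    have hVmono : Monotone V := fun e e' hee w hw =>
      hU _ hw _ (add_le_add le_rfl (single_le_single hee))
    obtain ⟨d, hd⟩ := chain_stab V hVmono hVup
    choose Ls hLsupp hLpw hLunion using fun e => IH (V e) (hVup e)
    -- basic facts about entries of `Ls e`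
    have hbase : ∀ e, ∀ p ∈ Ls e, p.1 a = 0 ∧ a ∉ p.2 := by
      intro e p hp
      obtain ⟨h1, h2⟩ := hLsupp e p hp
      constructor
      · by_contra hne
        exact ha (h2 a hne)
      · intro hmem
        exact ha (h1 hmem)
    set shift : ℕ → ((Fin n →₀ ℕ) × Finset (Fin n)) → ((Fin n →₀ ℕ) × Finset (Fin n)) :=
      fun e p => (p.1 + Finsupp.single a e, p.2) with hshiftdef
    set top : ((Fin n →₀ ℕ) × Finset (Fin n)) → ((Fin n →₀ ℕ) × Finset (Fin n)) :=
      fun p => (p.1 + Finsupp.single a d, insert a p.2) with htopdef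
    refine ⟨((List.range d).flatMap fun e => (Ls e).map (shift e)) ++ (Ls d).map top,
      ?_, ?_, ?_⟩
    · -- support condition
      intro p hp
      rcases List.mem_append.mp hp with hp | hp
      · obtain ⟨e, he, hp⟩ := List.mem_flatMap.mp hp
        obtain ⟨q, hq, rfl⟩ := List.mem_map.mp hp
        obtain ⟨h1, h2⟩ := hLsupp e q hq
        refine ⟨h1.trans (Finset.subset_insert a s), ?_⟩
        intro i hi
        rcases eq_or_ne a i with rfl | hia
        · exact Finset.mem_insert_self a s
        · refine Finset.mem_insert_of_mem (h2 i ?_)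
          simpa [Finsupp.add_apply, Finsupp.single_apply, hia, hshiftdef] using hi
      · obtain ⟨q, hq, rfl⟩ := List.mem_map.mp hp
        obtain ⟨h1, h2⟩ := hLsupp d q hq
        refine ⟨Finset.insert_subset_insert a h1, ?_⟩
        intro i hi
        rcases eq_or_ne a i with rfl | hia
        · exact Finset.mem_insert_self a s
        · refine Finset.mem_insert_of_mem (h2 i ?_)
          simpa [Finsupp.add_apply, Finsupp.single_apply, hia, htopdef] using hi
    · -- pairwise NoDom
      rw [List.pairwise_append]
      refine ⟨?_, ?_, ?_⟩
      · -- within the flatMap part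
        rw [List.pairwise_flatMap]
        constructor
        · intro e he
          rw [List.pairwise_map]
          refine (hLpw e).imp_of_mem ?_
          intro p q hp hq hpq
          intro w hw hle
          obtain ⟨hp1, hp2⟩ := hbase e p hp
          obtain ⟨hq1, hq2⟩ := hbase e q hq
          have hw' := (mem_cone_shift hp1 hp2 e w).mp hw
          exact hpq _ hw'.1 (le_erase_of_add_single_le hq1 hle)
        · refine (List.pairwise_lt_range : (List.range d).Pairwise (· < ·)).imp ?_
          intro e e' hee p hp q hq
          obtain ⟨p0, hp0, rfl⟩ := List.mem_map.mp hp
          obtain ⟨q0, hq0, rfl⟩ := List.mem_map.mp hq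
          obtain ⟨hp1, hp2⟩ := hbase e p0 hp0
          obtain ⟨hq1, hq2⟩ := hbase e' q0 hq0
          intro w hw hle
          have hwa : w a = e := ((mem_cone_shift hp1 hp2 e w).mp hw).2
          have : e' ≤ w a := by
            have := Finsupp.le_def.mp hle a
            simpa [Finsupp.add_apply, hq1, hshiftdef] using this
          omega
      · -- within the top part
        rw [List.pairwise_map]
        refine (hLpw d).imp_of_mem ?_
        intro p q hp hq hpq
        intro w hw hle
        obtain ⟨hp1, hp2⟩ := hbase d p hp
        obtain ⟨hq1, hq2⟩ := hbase d q hq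
        have hw' := (mem_cone_top hp1 hp2 d w).mp hw
        exact hpq _ hw'.1 (le_erase_of_add_single_le hq1 hle)
      · -- across the append
        intro p hp q hq
        obtain ⟨e, he, hp⟩ := List.mem_flatMap.mp hp
        obtain ⟨p0, hp0, rfl⟩ := List.mem_map.mp hp
        obtain ⟨q0, hq0, rfl⟩ := List.mem_map.mp hq
        obtain ⟨hp1, hp2⟩ := hbase e p0 hp0
        obtain ⟨hq1, hq2⟩ := hbase d q0 hq0
        intro w hw hle
        have hwa : w a = e := ((mem_cone_shift hp1 hp2 e w).mp hw).2
        have hed : e < d := List.mem_range.mp he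
        have : d ≤ w a := by
          have := Finsupp.le_def.mp hle a
          simpa [Finsupp.add_apply, hq1, htopdef] using this
        omega
    · -- the union condition
      intro w
      have hw_dec : Finsupp.erase a w + Finsupp.single a (w a) = w :=
        Finsupp.erase_add_single a w
      constructor
      · rintro ⟨p, hp, hw⟩
        rcases List.mem_append.mp hp with hp | hp
        · obtain ⟨e, he, hp⟩ := List.mem_flatMap.mp hp
          obtain ⟨p0, hp0, rfl⟩ := List.mem_map.mp hp
          obtain ⟨hp1, hp2⟩ := hbase e p0 hp0
          obtain ⟨hw1, hw2⟩ := (mem_cone_shift hp1 hp2 e w).mp hw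
          obtain ⟨hsupp, hnV⟩ := (hLunion e (Finsupp.erase a w)).mp ⟨p0, hp0, hw1⟩
          constructor
          · intro i hi
            rcases eq_or_ne a i with rfl | hia
            · exact Finset.mem_insert_self a s
            · refine Finset.mem_insert_of_mem (hsupp i ?_)
              rwa [Finsupp.erase_ne (Ne.symm hia)]
          · intro hwU
            exact hnV (by rw [hVdef]; exact Set.mem_setOf.mpr (by rw [← hw2, hw_dec]; exact hwU))
        · obtain ⟨p0, hp0, rfl⟩ := List.mem_map.mp hp
          obtain ⟨hp1, hp2⟩ := hbase d p0 hp0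
          obtain ⟨hw1, hw2⟩ := (mem_cone_top hp1 hp2 d w).mp hw
          obtain ⟨hsupp, hnV⟩ := (hLunion d (Finsupp.erase a w)).mp ⟨p0, hp0, hw1⟩
          constructor
          · intro i hi
            rcases eq_or_ne a i with rfl | hia
            · exact Finset.mem_insert_self a s
            · refine Finset.mem_insert_of_mem (hsupp i ?_)
              rwa [Finsupp.erase_ne (Ne.symm hia)]
          · intro hwU
            have : Finsupp.erase a w ∈ V (w a) := Set.mem_setOf.mpr (by rw [hw_dec]; exact hwU)
            rw [hd (w a) hw2] at this
            exact hnV this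
      · rintro ⟨hsupp, hwU⟩
        have hsupp' : ∀ i, Finsupp.erase a w i ≠ 0 → i ∈ s := by
          intro i hi
          rcases eq_or_ne i a with rfl | hia
          · rw [Finsupp.erase_same] at hi; exact absurd rfl hi
          · rw [Finsupp.erase_ne hia] at hi
            rcases Finset.mem_insert.mp (hsupp i hi) with h | h
            · exact absurd h hia
            · exact h
        by_cases hwa : w a < d
        · have hnV : Finsupp.erase a w ∉ V (w a) := by
            intro hmem
            simp only [hVdef, Set.mem_setOf_eq] at hmem
            rw [hw_dec] at hmem
            exact hwU hmem
          obtain ⟨p, hp, hw⟩ := (hLunion (w a) (Finsupp.erase a w)).mpr ⟨hsupp', hnV⟩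
          obtain ⟨hp1, hp2⟩ := hbase (w a) p hp
          refine ⟨shift (w a) p, ?_, ?_⟩
          · exact List.mem_append_left _ (List.mem_flatMap.mpr ⟨w a, List.mem_range.mpr hwa,
              List.mem_map.mpr ⟨p, hp, rfl⟩⟩)
          · exact (mem_cone_shift hp1 hp2 (w a) w).mpr ⟨hw, rfl⟩
        · push_neg at hwa
          have hnV : Finsupp.erase a w ∉ V d := by
            rw [← hd (w a) hwa]
            intro hmem
            simp only [hVdef, Set.mem_setOf_eq] at hmem
            rw [hw_dec] at hmem
            exact hwU hmem
          obtain ⟨p, hp, hw⟩ := (hLunion d (Finsupp.erase a w)).mpr ⟨hsupp', hnV⟩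
          obtain ⟨hp1, hp2⟩ := hbase d p hp
          refine ⟨top p, ?_, ?_⟩
          · exact List.mem_append_right _ (List.mem_map.mpr ⟨p, hp, rfl⟩)
          · exact (mem_cone_top hp1 hp2 d w).mpr ⟨hw, hwa⟩

end StanleyAux

/-- every proper monomial ideal `I` in `S = k[x_1,…,x_n]` admits a Stanley
filtration of `S/I`. -/
theorem exists_stanley_filtration {k : Type} [Field k] {n : ℕ}
    (I : Ideal (MvPolynomial (Fin n) k)) (hmon : IsMonomialIdeal I) (hproper : I ≠ ⊤) :
    ∃ L : List ((Fin n →₀ ℕ) × Finset (Fin n)), IsStanleyFiltration I L := by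
  classical
  obtain ⟨G, hG⟩ := hmon
  set U : Set (Fin n →₀ ℕ) := {w | monomial w (1 : k) ∈ I} with hUdef
  have hUchar : ∀ w, w ∈ U ↔ ∃ g ∈ G, g ≤ w := by
    intro w
    rw [hUdef, Set.mem_setOf_eq, hG, mem_ideal_span_monomial_image]
    simp [support_monomial, (one_ne_zero : (1 : k) ≠ 0)]
  have hUup : ∀ w ∈ U, ∀ w', w ≤ w' → w' ∈ U := by
    intro w hw w' hle
    rw [hUchar] at hw ⊢
    obtain ⟨g, hg, hgle⟩ := hw
    exact ⟨g, hg, hgle.trans hle⟩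
  obtain ⟨L, hsupp, hpw, hunion⟩ := StanleyAux.comb_main Finset.univ U hUup
  -- full pairwise disjointness (in symmetric form)
  have hdisj : ∀ p ∈ L, ∀ q ∈ L, p ≠ q →
      Disjoint (stanleyPairSet p.1 p.2) (stanleyPairSet q.1 q.2) := by
    have hsym : Symmetric (fun p q : (Fin n →₀ ℕ) × Finset (Fin n) =>
        Disjoint (stanleyPairSet p.1 p.2) (stanleyPairSet q.1 q.2)) :=
      fun p q h => h.symm
    have hpw' : L.Pairwise (fun p q => Disjoint (stanleyPairSet p.1 p.2)
        (stanleyPairSet q.1 q.2)) := by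
      refine hpw.imp ?_
      intro p q h
      rw [Set.disjoint_left]
      intro w hwp hwq
      exact h w hwp (StanleyAux.le_of_mem hwq)
    intro p hp q hq hne
    exact @List.Pairwise.forall _ _ _ ⟨hsym⟩ hpw' p hp q hq hne
  refine ⟨L, ?_, ?_⟩
  · constructor
    · intro p hp q hq hne
      exact hdisj p (List.mem_toFinset.mp hp) q (List.mem_toFinset.mp hq) hne
    · ext w
      simp only [Set.mem_iUnion, Finset.mem_coe, List.mem_toFinset, Set.mem_setOf_eq,
        exists_prop]
      rw [show (∃ p, p ∈ L ∧ w ∈ stanleyPairSet p.1 p.2) ↔ _ from hunion w]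
      simp [hUdef]
  · intro j hj1 hj2
    -- characterize membership in the enlarged ideal
    have hJchar : ∀ w, monomial w (1 : k) ∈
        (I ⊔ Ideal.span ((fun p : (Fin n →₀ ℕ) × Finset (Fin n) => monomial p.1 (1 : k)) ''
          {p | p ∈ L.drop j})) ↔ (w ∈ U ∨ ∃ q ∈ L.drop j, q.1 ≤ w) := by
      intro w
      have himg : (fun p : (Fin n →₀ ℕ) × Finset (Fin n) => monomial p.1 (1 : k)) ''
          {p | p ∈ L.drop j} = (fun u => monomial u (1 : k)) ''
            (Prod.fst '' {p | p ∈ L.drop j}) := by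
        rw [Set.image_image]
      rw [himg, hG, ← Ideal.span_union, ← Set.image_union, mem_ideal_span_monomial_image]
      simp only [support_monomial, if_neg (one_ne_zero : (1 : k) ≠ 0), Finset.mem_singleton,
        forall_eq, Set.mem_union, Set.mem_image, Set.mem_setOf_eq]
      constructor
      · rintro ⟨g, (hg | ⟨q, hq, rfl⟩), hgle⟩
        · exact Or.inl ((hUchar w).mpr ⟨g, hg, hgle⟩)
        · exact Or.inr ⟨q, hq, hgle⟩
      · rintro (hw | ⟨q, hq, hqle⟩)
        · obtain ⟨g, hg, hgle⟩ := (hUchar w).mp hw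
          exact ⟨g, Or.inl hg, hgle⟩
        · exact ⟨q.1, Or.inr ⟨q, hq, rfl⟩, hqle⟩
    have hcross : ∀ p ∈ L.take j, ∀ q ∈ L.drop j, StanleyAux.NoDom p q := by
      have hpw2 : (L.take j ++ L.drop j).Pairwise StanleyAux.NoDom := by
        rw [List.take_append_drop]; exact hpw
      exact (List.pairwise_append.mp hpw2).2.2
    constructor
    · intro p hp q hq hne
      exact hdisj p (List.take_subset j L (List.mem_toFinset.mp hp))
        q (List.take_subset j L (List.mem_toFinset.mp hq)) hne
    · ext w
      simp only [Set.mem_iUnion, Finset.mem_coe, List.mem_toFinset, Set.mem_setOf_eq,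
        exists_prop]
      rw [hJchar w]
      push_neg
      constructor
      · rintro ⟨p, hp, hw⟩
        constructor
        · exact ((hunion w).mp ⟨p, List.take_subset j L hp, hw⟩).2
        · intro q hq
          exact hcross p hp q hq w hw
      · rintro ⟨hwU, hnd⟩
        obtain ⟨p, hpL, hw⟩ := (hunion w).mpr ⟨fun i _ => Finset.mem_univ i, hwU⟩
        rcases List.mem_append.mp (show p ∈ L.take j ++ L.drop j by
            rw [List.take_append_drop]; exact hpL) with hp | hp
        · exact ⟨p, hp, hw⟩
        · exact absurd (StanleyAux.le_of_mem hw) (hnd p hp)
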